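/- Let g : ℝ → ℝ be a homeomorphism without fixed points with g(0) > 0, let n ≥ 2, choose points 0 = p₀ < p₁ < ⋯ < pₙ = g(0), and choose homeomorphisms fᵢ : [pᵢ₋₁, pᵢ] → [pᵢ, pᵢ₊₁] for 1 ≤ i < n; set fₙ = g ∘ f₁⁻¹ ∘ ⋯ ∘ fₙ₋₁⁻¹ : [pₙ₋₁, pₙ] → [pₙ, g(p₁)]. Define f : ℝ → ℝ to agree with fᵢ on each [pᵢ₋₁, pᵢ] and with gᵏ f g⁻ᵏ on [gᵏ(0), gᵏ⁺¹(0)] for k ≠ 0. Then f is a well-defined homeomorphism of ℝ and fⁿ = g. -/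

import Mathlib

/-- `compSeq f k = f k ∘ ⋯ ∘ f 1`. -/
def compSeq (f : ℕ → ℝ → ℝ) : ℕ → ℝ → ℝ
  | 0 => id
  | k + 1 => f (k + 1) ∘ compSeq f k

variable {g : Equiv.Perm ℝ}

lemma aux_zpow_succ (g : Equiv.Perm ℝ) (k : ℤ) (x : ℝ) :
    (g ^ (k + 1)) x = g ((g ^ k) x) := by
  have : (g : Equiv.Perm ℝ) ^ (k + 1) = g * g ^ k := by
    rw [← zpow_one_add]; ring_nf
  rw [this, Equiv.Perm.mul_apply]

lemma aux_zpow_succ' (g : Equiv.Perm ℝ) (k : ℤ) (x : ℝ) :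
    (g ^ (k + 1)) x = (g ^ k) (g x) := by
  rw [zpow_add_one, Equiv.Perm.mul_apply]

lemma aux_zpow_cancel (g : Equiv.Perm ℝ) (k l : ℤ) (x : ℝ) :
    (g ^ k) ((g ^ l) x) = (g ^ (k + l)) x := by
  rw [← Equiv.Perm.mul_apply, ← zpow_add]

lemma aux_inv_strictMono (hg : StrictMono ⇑g) : StrictMono ⇑g⁻¹ := by
  intro a b hab
  by_contra h
  push_neg at h
  have := hg.monotone h
  simp only [← Equiv.Perm.mul_apply, mul_inv_cancel, Equiv.Perm.one_apply] at this
  exact absurd this (not_le.2 hab)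

lemma aux_zpow_strictMono (hg : StrictMono ⇑g) : ∀ k : ℤ, StrictMono ⇑(g ^ k) := by
  intro k
  induction k using Int.induction_on with
  | zero => simpa using strictMono_id
  | succ i ih =>
      intro a b hab
      rw [aux_zpow_succ, aux_zpow_succ]
      exact hg (ih hab)
  | pred i ih =>
      intro a b hab
      have e : (g : Equiv.Perm ℝ) ^ (-(i : ℤ) - 1) = g⁻¹ * g ^ (-(i : ℤ)) := by
        rw [← zpow_neg_one, ← zpow_add]; ring_nf
      rw [e]
      exact aux_inv_strictMono hg (ih hab)

/-- orbit goes above anything -/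
lemma aux_orbit_above (hg : StrictMono ⇑g) (hfix : ∀ x : ℝ, g x > x) (x y : ℝ) :
    ∃ k : ℕ, y ≤ (g ^ (k : ℤ)) x := by
  by_contra h
  push_neg at h
  set u : ℕ → ℝ := fun k => (g ^ (k : ℤ)) x with hu
  have hsucc : ∀ k : ℕ, u (k + 1) = g (u k) := by
    intro k
    simp only [hu]
    push_cast
    rw [aux_zpow_succ]
  have hmono : Monotone u := monotone_nat_of_le_succ fun k => by
    rw [hsucc]; exact (hfix (u k)).le
  have hbdd : BddAbove (Set.range u) := ⟨y, by rintro _ ⟨k, rfl⟩; exact (h k).le⟩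
  have hlim : Filter.Tendsto u Filter.atTop (nhds (⨆ k, u k)) :=
    tendsto_atTop_ciSup hmono hbdd
  have hgc : Continuous ⇑g := hg.monotone.continuous_of_surjective g.surjective
  have hlim2 : Filter.Tendsto (fun k => g (u k)) Filter.atTop (nhds (g (⨆ k, u k))) :=
    (hgc.tendsto _).comp hlim
  have hlim3 : Filter.Tendsto (fun k => u (k + 1)) Filter.atTop (nhds (⨆ k, u k)) :=
    hlim.comp (Filter.tendsto_add_atTop_nat 1)
  have : g (⨆ k, u k) = ⨆ k, u k := by
    apply tendsto_nhds_unique _ hlim3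
    simpa only [hsucc] using hlim2
  exact absurd this (ne_of_gt (hfix _))

lemma aux_cover (hg : StrictMono ⇑g) (hfix : ∀ x : ℝ, g x > x) (b : ℝ) (x : ℝ) :
    ∃ k : ℤ, (g ^ k) b ≤ x ∧ x ≤ (g ^ (k + 1)) b := by
  have horb : StrictMono (fun k : ℤ => (g ^ k) b) := by
    apply strictMono_int_of_lt_succ
    intro k
    rw [aux_zpow_succ]
    exact hfix _
  have hne : ∃ k : ℤ, (g ^ k) b ≤ x := by
    obtain ⟨m, hm⟩ := aux_orbit_above hg hfix x b
    refine ⟨-(m : ℤ), ?_⟩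
    have := (aux_zpow_strictMono hg (-(m : ℤ))).monotone hm
    rwa [aux_zpow_cancel, neg_add_cancel, zpow_zero, Equiv.Perm.coe_one, id_eq] at this
  obtain ⟨m, hm⟩ := aux_orbit_above hg hfix b x
  have hbd : ∀ k : ℤ, (g ^ k) b ≤ x → k ≤ (m : ℤ) := by
    intro k hk
    by_contra hlt
    push_neg at hlt
    exact absurd (hk.trans hm) (not_le.2 (horb hlt))
  obtain ⟨k, hk1, hk2⟩ := Int.exists_greatest_of_bdd ⟨(m : ℤ), fun z hz => hbd z hz⟩ hne
  refine ⟨k, hk1, ?_⟩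
  by_contra hlt
  push_neg at hlt
  exact absurd (hk2 (k + 1) hlt.le) (by omega)

/-- endpoints of strictly monotone interval maps -/
lemma aux_endpoints {f : ℝ → ℝ} {a b c d : ℝ} (hab : a ≤ b)
    (hmono : StrictMonoOn f (Set.Icc a b)) (him : f '' Set.Icc a b = Set.Icc c d) :
    f a = c ∧ f b = d := by
  have ha : a ∈ Set.Icc a b := ⟨le_refl a, hab⟩
  have hb : b ∈ Set.Icc a b := ⟨hab, le_refl b⟩
  have hfa : f a ∈ Set.Icc c d := him ▸ ⟨a, ha, rfl⟩
  have hfb : f b ∈ Set.Icc c d := him ▸ ⟨b, hb, rfl⟩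
  have hcd : c ≤ d := hfa.1.trans hfa.2
  have hc : c ∈ f '' Set.Icc a b := him ▸ Set.left_mem_Icc.2 hcd
  have hd : d ∈ f '' Set.Icc a b := him ▸ Set.right_mem_Icc.2 hcd
  obtain ⟨z, hz, hzc⟩ := hc
  obtain ⟨w, hw, hwd⟩ := hd
  constructor
  · exact le_antisymm (hzc ▸ hmono.monotoneOn ha hz hz.1) hfa.1
  · exact le_antisymm hfb.2 (hwd ▸ hmono.monotoneOn hw hb hw.2)

/-- gluing strictly monotone pieces -/
lemma aux_glue {f : ℝ → ℝ} {a b c : ℝ} (hab : a ≤ b) (hbc : b ≤ c)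
    (h1 : StrictMonoOn f (Set.Icc a b)) (h2 : StrictMonoOn f (Set.Icc b c)) :
    StrictMonoOn f (Set.Icc a c) := by
  intro x hx y hy hxy
  rcases le_or_gt y b with hyb | hyb
  · exact h1 ⟨hx.1, hxy.le.trans hyb⟩ ⟨hy.1, hyb⟩ hxy
  · rcases le_or_gt b x with hbx | hbx
    · exact h2 ⟨hbx, hx.2⟩ ⟨hbx.trans hxy.le, hy.2⟩ hxy
    · calc f x < f b := h1 ⟨hx.1, hbx.le⟩ ⟨hab, le_refl b⟩ hbx
        _ < f y := h2 ⟨le_refl b, hbc⟩ ⟨hyb.le, hy.2⟩ hyb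


/-- Piecewise construction of an n-th root of a fixed-point-free orientation-preserving
homeomorphism `g` of ℝ with `g 0 > 0`.  Given dyadic-free data: points
`0 = p 0 < p 1 < ⋯ < p n = g 0`, increasing homeomorphisms
`f i : [p (i-1), p i] → [p i, p (i+1)]` for `1 ≤ i < n`, and `f n` chosen so that
`f n ∘ ⋯ ∘ f 1 = g` on `[p 0, p 1]`, any function `F` agreeing with `f i` on
`[p (i-1), p i]` and with `gᵏ F g⁻ᵏ` on `[gᵏ 0, gᵏ⁺¹ 0]` for `k ≠ 0` is a
homeomorphism of ℝ with `Fⁿ = g`. -/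
theorem piecewise_nth_root (g : Equiv.Perm ℝ)
    (hg : StrictMono g) (hfix : ∀ x : ℝ, g x > x)
    (n : ℕ) (hn : 2 ≤ n)
    (p : ℕ → ℝ) (hp0 : p 0 = 0) (hpn : p n = g 0)
    (hpmono : ∀ i : ℕ, i < n → p i < p (i + 1))
    (f : ℕ → ℝ → ℝ)
    (hfi : ∀ i : ℕ, 1 ≤ i → i < n →
      StrictMonoOn (f i) (Set.Icc (p (i - 1)) (p i)) ∧
      f i '' Set.Icc (p (i - 1)) (p i) = Set.Icc (p i) (p (i + 1)))
    (hfn : ∀ x ∈ Set.Icc (p 0) (p 1), compSeq f n x = g x)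
    (hfnmono : StrictMonoOn (f n) (Set.Icc (p (n - 1)) (p n)))
    (hfnim : f n '' Set.Icc (p (n - 1)) (p n) = Set.Icc (p n) (g (p 1)))
    (F : ℝ → ℝ)
    (hFi : ∀ i : ℕ, 1 ≤ i → i ≤ n → ∀ x ∈ Set.Icc (p (i - 1)) (p i), F x = f i x)
    (hFk : ∀ k : ℤ, k ≠ 0 → ∀ x ∈ Set.Icc ((g ^ k) 0) ((g ^ (k + 1)) 0),
      F x = (g ^ k) (F ((g ^ (-k)) x))) :
    StrictMono F ∧ Function.Bijective F ∧ Continuous F ∧ F^[n] = ⇑g := by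
  -- monotonicity of the partition points
  have hplt : ∀ j, j ≤ n → ∀ i, i < j → p i < p j := by
    intro j
    induction j with
    | zero => omega
    | succ m ih =>
        intro hm i hi
        rcases Nat.lt_succ_iff_lt_or_eq.1 hi with h | h
        · exact (ih (by omega) i h).trans (hpmono m (by omega))
        · subst h; exact hpmono i (by omega)
  have hple : ∀ i j, i ≤ j → j ≤ n → p i ≤ p j := by
    intro i j hij hjn
    rcases eq_or_lt_of_le hij with h | h
    · subst h; exact le_refl _
    · exact (hplt j hjn i h).le
  set q : ℕ → ℝ := fun i => if i = n + 1 then g (p 1) else p i with hqdef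
  have hqp : ∀ i, i ≤ n → q i = p i := by
    intro i hi; simp only [hqdef]; rw [if_neg (by omega)]
  have hqlast : q (n + 1) = g (p 1) := by simp [hqdef]
  have hpn_lt : p n < g (p 1) := by
    rw [hpn]; exact hg (by rw [← hp0]; exact hpmono 0 (by omega))
  have hqle : ∀ i j, i ≤ j → j ≤ n + 1 → q i ≤ q j := by
    intro i j hij hjn
    by_cases hj : j = n + 1
    · subst hj
      by_cases hi : i = n + 1
      · subst hi; exact le_refl _
      · rw [hqp i (by omega), hqlast]
        exact (hple i n (by omega) le_rfl).trans hpn_lt.le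
    · rw [hqp i (by omega), hqp j (by omega)]; exact hple i j hij (by omega)
  -- unified piece data
  have hpiece : ∀ i, 1 ≤ i → i ≤ n →
      StrictMonoOn (f i) (Set.Icc (p (i - 1)) (p i)) ∧
      f i '' Set.Icc (p (i - 1)) (p i) = Set.Icc (p i) (q (i + 1)) := by
    intro i h1 h2
    rcases Nat.lt_succ_iff_lt_or_eq.1 (Nat.lt_succ_of_le h2) with h | h
    · exact ⟨(hfi i h1 h).1, by rw [(hfi i h1 h).2, hqp (i+1) (by omega)]⟩
    · subst h; exact ⟨hfnmono, by rw [hfnim, hqlast]⟩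
  have hend : ∀ i, 1 ≤ i → i ≤ n → f i (p (i - 1)) = p i ∧ f i (p i) = q (i + 1) := by
    intro i h1 h2
    exact aux_endpoints (hple (i-1) i (by omega) h2) (hpiece i h1 h2).1 (hpiece i h1 h2).2
  -- F at partition points
  have hFp : ∀ i, i ≤ n → F (p i) = q (i + 1) := by
    intro i hi
    rcases Nat.eq_zero_or_pos i with h | h
    · subst h
      have h0 : p 0 ∈ Set.Icc (p (1 - 1)) (p 1) := by
        simp only [Nat.sub_self]
        exact ⟨le_refl _, hple 0 1 (by omega) (by omega)⟩
      rw [hFi 1 le_rfl (by omega) (p 0) h0]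
      rw [hqp 1 (by omega)]
      have := (hend 1 le_rfl (by omega)).1
      simpa using this
    · have hmem : p i ∈ Set.Icc (p (i - 1)) (p i) :=
        ⟨hple (i-1) i (by omega) hi, le_refl _⟩
      rw [hFi i h hi (p i) hmem]
      exact (hend i h hi).2
  -- strict monotonicity of F on [p 0, p n]
  have hSM0 : ∀ m, m ≤ n → StrictMonoOn F (Set.Icc (p 0) (p m)) := by
    intro m
    induction m with
    | zero =>
        intro _ x hx y hy hxy
        have hx' : x = p 0 := le_antisymm hx.2 hx.1
        have hy' : y = p 0 := le_antisymm hy.2 hy.1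
        rw [hx', hy'] at hxy
        exact absurd hxy (lt_irrefl _)
    | succ m ih =>
        intro hm
        have hpiecemono : StrictMonoOn F (Set.Icc (p m) (p (m + 1))) := by
          intro x hx y hy hxy
          have hx' : x ∈ Set.Icc (p ((m+1) - 1)) (p (m+1)) := by simpa using hx
          have hy' : y ∈ Set.Icc (p ((m+1) - 1)) (p (m+1)) := by simpa using hy
          rw [hFi (m+1) (by omega) hm x hx', hFi (m+1) (by omega) hm y hy']
          exact (hpiece (m+1) (by omega) hm).1 hx' hy' hxy
        exact aux_glue (hple 0 m (by omega) (by omega)) (hple m (m+1) (by omega) hm)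
          (ih (by omega)) hpiecemono
  have hSMI0 : StrictMonoOn F (Set.Icc (p 0) (p n)) := hSM0 n le_rfl
  -- image of F on [p 0, p n]
  have himage0' : ∀ m, 1 ≤ m → m ≤ n →
      F '' Set.Icc (p 0) (p m) = Set.Icc (p 1) (q (m + 1)) := by
    intro m
    induction m with
    | zero => omega
    | succ m ih =>
        intro _ hm
        rcases Nat.eq_zero_or_pos m with h | h
        · subst h
          have : Set.EqOn F (f 1) (Set.Icc (p 0) (p 1)) := by
            intro x hx
            exact hFi 1 le_rfl (by omega) x (by simpa using hx)
          rw [Set.image_congr this]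
          have := (hpiece 1 le_rfl (by omega)).2
          simpa using this
        · have hsplit : Set.Icc (p 0) (p (m + 1)) =
              Set.Icc (p 0) (p m) ∪ Set.Icc (p m) (p (m + 1)) :=
            (Set.Icc_union_Icc_eq_Icc (hple 0 m (by omega) (by omega))
              (hple m (m+1) (by omega) hm)).symm
          have heqon : Set.EqOn F (f (m+1)) (Set.Icc (p m) (p (m + 1))) := by
            intro x hx
            exact hFi (m+1) (by omega) hm x (by simpa using hx)
          rw [hsplit, Set.image_union, ih h (by omega), Set.image_congr heqon]
          have him2 := (hpiece (m+1) (by omega) hm).2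
          simp only [Nat.add_sub_cancel] at him2
          rw [him2, hqp (m+1) (by omega)]
          exact Set.Icc_union_Icc_eq_Icc (hple 1 (m+1) (by omega) hm)
            (by rw [← hqp (m+1) (by omega)]; exact hqle (m+1) (m+2) (by omega) (by omega))
  have himage0 : F '' Set.Icc (p 0) (p n) = Set.Icc (p 1) (g (p 1)) := by
    rw [himage0' n (by omega) le_rfl, hqlast]
  -- the conjugation formula, valid for all k
  have hform : ∀ k : ℤ, ∀ x, (g ^ k) 0 ≤ x → x ≤ (g ^ (k + 1)) 0 →
      F x = (g ^ k) (F ((g ^ (-k)) x)) := by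
    intro k x h1 h2
    by_cases hk : k = 0
    · subst hk; simp
    · exact hFk k hk x ⟨h1, h2⟩
  -- translates of the fundamental interval
  have hmaps : ∀ k : ℤ, ∀ x, (g ^ k) 0 ≤ x → x ≤ (g ^ (k + 1)) 0 →
      (g ^ (-k)) x ∈ Set.Icc (p 0) (p n) := by
    intro k x h1 h2
    constructor
    · rw [hp0]
      have := (aux_zpow_strictMono hg (-k)).monotone h1
      rwa [aux_zpow_cancel, neg_add_cancel, zpow_zero, Equiv.Perm.coe_one, id_eq] at this
    · rw [hpn]
      have := (aux_zpow_strictMono hg (-k)).monotone h2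
      rwa [aux_zpow_cancel, neg_add_cancel_left, zpow_one] at this
  -- F commutes with g
  have hcomm : ∀ x, F (g x) = g (F x) := by
    intro x
    obtain ⟨k, h1, h2⟩ := aux_cover hg hfix 0 x
    have hgx1 : (g ^ (k + 1)) 0 ≤ g x := by
      rw [aux_zpow_succ]; exact hg.monotone h1
    have hgx2 : g x ≤ (g ^ (k + 1 + 1)) 0 := by
      rw [aux_zpow_succ g (k+1)]; exact hg.monotone h2
    have e1 : (g ^ (-(k+1))) (g x) = (g ^ (-k)) x := by
      have := aux_zpow_succ' g (-(k+1)) x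
      rw [show (-(k+1) : ℤ) + 1 = -k by ring] at this
      exact this.symm
    rw [hform (k+1) (g x) hgx1 hgx2, e1, aux_zpow_succ, ← hform k x h1 h2]
  have hcomm_inv : ∀ x, F (g⁻¹ x) = g⁻¹ (F x) := by
    intro x
    have := hcomm (g⁻¹ x)
    rw [← Equiv.Perm.mul_apply, mul_inv_cancel, Equiv.Perm.one_apply] at this
    rw [this, ← Equiv.Perm.mul_apply, inv_mul_cancel, Equiv.Perm.one_apply]
  have hcommz : ∀ k : ℤ, ∀ x, F ((g ^ k) x) = (g ^ k) (F x) := by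
    intro k
    induction k using Int.induction_on with
    | zero => simp
    | succ i ih =>
        intro x
        rw [aux_zpow_succ, hcomm, ih, ← aux_zpow_succ]
    | pred i ih =>
        intro x
        have e : (g : Equiv.Perm ℝ) ^ (-(i : ℤ) - 1) = g⁻¹ * g ^ (-(i : ℤ)) := by
          rw [← zpow_neg_one, ← zpow_add]; ring_nf
        rw [e, Equiv.Perm.mul_apply, Equiv.Perm.mul_apply, hcomm_inv, ih]
  -- strict monotonicity on each translate
  have hSMIk : ∀ k : ℤ, StrictMonoOn F (Set.Icc ((g ^ k) 0) ((g ^ (k + 1)) 0)) := by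
    intro k x hx y hy hxy
    rw [hform k x hx.1 hx.2, hform k y hy.1 hy.2]
    exact aux_zpow_strictMono hg k
      (hSMI0 (hmaps k x hx.1 hx.2) (hmaps k y hy.1 hy.2) (aux_zpow_strictMono hg (-k) hxy))
  have hF0 : F 0 = p 1 := by
    rw [← hp0, hFp 0 (by omega), hqp 1 (by omega)]
  have hE : ∀ k : ℤ, F ((g ^ k) 0) = (g ^ k) (p 1) := by
    intro k; rw [hcommz k 0, hF0]
  have horb0 : StrictMono (fun k : ℤ => (g ^ k) 0) := by
    apply strictMono_int_of_lt_succ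
    intro k; rw [aux_zpow_succ]; exact hfix _
  have hEmono : StrictMono (fun k : ℤ => (g ^ k) (p 1)) := by
    apply strictMono_int_of_lt_succ
    intro k; rw [aux_zpow_succ]; exact hfix _
  -- global strict monotonicity
  have hmono : StrictMono F := by
    intro x y hxy
    obtain ⟨a, hx1, hx2⟩ := aux_cover hg hfix 0 x
    obtain ⟨b, hy1, hy2⟩ := aux_cover hg hfix 0 y
    rcases le_or_gt y ((g ^ (a + 1)) 0) with hle | hlt
    · exact hSMIk a ⟨hx1, hx2⟩ ⟨hx1.trans hxy.le, hle⟩ hxy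
    · have hab : a + 1 ≤ b := by
        by_contra hc
        push_neg at hc
        have : b + 1 ≤ a + 1 := by omega
        exact absurd (hy2.trans (horb0.monotone this)) (not_le.2 hlt)
      have hub : (g ^ a) 0 ≤ (g ^ (a+1)) 0 := (horb0.monotone (by omega : a ≤ a + 1))
      have h1 : F x ≤ F ((g ^ (a+1)) 0) :=
        (hSMIk a).monotoneOn ⟨hx1, hx2⟩ ⟨hub, le_refl _⟩ hx2
      rcases hy1.lt_or_eq with hlt' | heq
      · have h3 : F ((g ^ b) 0) < F y :=
          hSMIk b ⟨le_refl _, horb0.monotone (by omega : b ≤ b + 1)⟩ ⟨hy1, hy2⟩ hlt'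
        have h2 : F ((g ^ (a+1)) 0) ≤ F ((g ^ b) 0) := by
          rw [hE, hE]; exact hEmono.monotone hab
        exact lt_of_le_of_lt (h1.trans h2) h3
      · have hb' : a + 1 < b := by
          have := heq ▸ hlt
          exact horb0.lt_iff_lt.1 this
        have h2 : F ((g ^ (a+1)) 0) < F ((g ^ b) 0) := by
          rw [hE, hE]; exact hEmono hb'
        rw [← heq]
        exact lt_of_le_of_lt h1 h2
  -- surjectivity
  have hsurj : Function.Surjective F := by
    intro y
    obtain ⟨k, h1, h2⟩ := aux_cover hg hfix (p 1) y
    have hz1 : p 1 ≤ (g ^ (-k)) y := by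
      have := (aux_zpow_strictMono hg (-k)).monotone h1
      rwa [aux_zpow_cancel, neg_add_cancel, zpow_zero, Equiv.Perm.coe_one, id_eq] at this
    have hz2 : (g ^ (-k)) y ≤ g (p 1) := by
      have := (aux_zpow_strictMono hg (-k)).monotone h2
      rwa [aux_zpow_cancel, neg_add_cancel_left, zpow_one] at this
    have : (g ^ (-k)) y ∈ F '' Set.Icc (p 0) (p n) := by
      rw [himage0]; exact ⟨hz1, hz2⟩
    obtain ⟨w, _, hw⟩ := this
    refine ⟨(g ^ k) w, ?_⟩
    rw [hcommz k w, hw, aux_zpow_cancel, add_neg_cancel, zpow_zero,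
      Equiv.Perm.coe_one, id_eq]
  have hcont : Continuous F := hmono.monotone.continuous_of_surjective hsurj
  -- iterates commute with powers of g
  have hcommIterZ : ∀ m : ℕ, ∀ k : ℤ, ∀ x, F^[m] ((g ^ k) x) = (g ^ k) (F^[m] x) := by
    intro m
    induction m with
    | zero => intro k x; simp
    | succ m ih =>
        intro k x
        rw [Function.iterate_succ_apply, Function.iterate_succ_apply, hcommz, ih]
  have hcommIter : ∀ m : ℕ, ∀ x, F^[m] (g x) = g (F^[m] x) := by
    intro m x
    have := hcommIterZ m 1 x
    rwa [zpow_one] at this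
  -- compSeq images
  have hcompim : ∀ i, i ≤ n →
      compSeq f i '' Set.Icc (p 0) (p 1) = Set.Icc (p i) (q (i + 1)) := by
    intro i
    induction i with
    | zero =>
        intro _
        simp only [compSeq, Set.image_id, hqp 1 (by omega)]
    | succ i ih =>
        intro hi
        have : compSeq f (i+1) '' Set.Icc (p 0) (p 1) =
            f (i+1) '' (compSeq f i '' Set.Icc (p 0) (p 1)) := by
          rw [show compSeq f (i+1) = f (i+1) ∘ compSeq f i from rfl, Set.image_comp]
        rw [this, ih (by omega), hqp (i+1) (by omega)]
        have him := (hpiece (i+1) (by omega) hi).2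
        simpa using him
  -- iterates of F agree with compSeq on [p 0, p 1]
  have hiter1 : ∀ i, i ≤ n → ∀ x ∈ Set.Icc (p 0) (p 1),
      F^[i] x = compSeq f i x := by
    intro i
    induction i with
    | zero => intro _ x _; simp [compSeq]
    | succ i ih =>
        intro hi x hx
        have hmem : compSeq f i x ∈ Set.Icc (p i) (p (i+1)) := by
          have : compSeq f i x ∈ compSeq f i '' Set.Icc (p 0) (p 1) := ⟨x, hx, rfl⟩
          rwa [hcompim i (by omega), hqp (i+1) (by omega)] at this
        rw [Function.iterate_succ_apply', ih (by omega) x hx,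
          show compSeq f (i+1) x = f (i+1) (compSeq f i x) from rfl,
          hFi (i+1) (by omega) hi (compSeq f i x) (by simpa using hmem)]
  have hIterBase : ∀ x ∈ Set.Icc (p 0) (p 1), F^[n] x = g x := by
    intro x hx
    rw [hiter1 n le_rfl x hx, hfn x hx]
  -- find the subinterval containing a point of [p 0, p n]
  have hfind : ∀ z, p 0 ≤ z → z ≤ p n → ∃ i, i < n ∧ p i ≤ z ∧ z ≤ p (i + 1) := by
    intro z hz0 hzn
    have : ∀ m, m ≤ n → z ≤ p m → ∃ i, i < n ∧ p i ≤ z ∧ z ≤ p (i + 1) := by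
      intro m
      induction m with
      | zero =>
          intro _ hm
          exact ⟨0, by omega, hz0, hm.trans (hple 0 1 (by omega) (by omega))⟩
      | succ m ih =>
          intro hm hzm
          by_cases h : z ≤ p m
          · exact ih (by omega) h
          · push_neg at h
            exact ⟨m, by omega, h.le, hzm⟩
    exact this n le_rfl hzn
  -- F^[n] = g on [p 0, p n]
  have hIter0 : ∀ z ∈ Set.Icc (p 0) (p n), F^[n] z = g z := by
    intro z hz
    obtain ⟨i, hi, hz1, hz2⟩ := hfind z hz.1 hz.2
    have : z ∈ compSeq f i '' Set.Icc (p 0) (p 1) := by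
      rw [hcompim i (by omega), hqp (i+1) (by omega)]
      exact ⟨hz1, hz2⟩
    obtain ⟨w, hw, hwz⟩ := this
    have hzw : z = F^[i] w := by rw [hiter1 i (by omega) w hw, hwz]
    rw [hzw, ← Function.iterate_add_apply, show n + i = i + n by omega,
      Function.iterate_add_apply, hIterBase w hw, hcommIter]
  -- conclusion
  refine ⟨hmono, ⟨hmono.injective, hsurj⟩, hcont, ?_⟩
  funext x
  obtain ⟨k, h1, h2⟩ := aux_cover hg hfix 0 x
  have hzmem := hmaps k x h1 h2
  have hxz : x = (g ^ k) ((g ^ (-k)) x) := by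
    rw [aux_zpow_cancel, add_neg_cancel, zpow_zero, Equiv.Perm.coe_one, id_eq]
  calc F^[n] x = F^[n] ((g ^ k) ((g ^ (-k)) x)) := by rw [← hxz]
    _ = (g ^ k) (F^[n] ((g ^ (-k)) x)) := hcommIterZ n k _
    _ = (g ^ k) (g ((g ^ (-k)) x)) := by rw [hIter0 _ hzmem]
    _ = g ((g ^ k) ((g ^ (-k)) x)) := by
        rw [← aux_zpow_succ' g k, aux_zpow_succ]
    _ = g x := by rw [← hxz]
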